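/- For a fixed basepoint x_0 ∈ X, let j_i : X^{n-1} → X^n be the inclusion inserting x_0 in the i-th coordinate, i.e. j_i(x_1,...,x_{n-1}) = (x_1,...,x_{i-1}, x_0, x_i,...,x_{n-1}), for i = 1,...,n. Then D(j_1,...,j_n) = cat(X^{n-1}). -/

import Mathlib

open Set

/-- The `n`-th homotopic distance of maps `f 0, …, f (n-1) : X → Y`:
the least `k` admitting an open cover `U 0, …, U k` of `X` on each element of
which all the maps are pairwise homotopic; `∞` if no such cover exists. -/
noncomputable def homDist {X Y : Type*} [TopologicalSpace X] [TopologicalSpace Y]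
    {n : ℕ} (f : Fin n → C(X, Y)) : ℕ∞ :=
  sInf ((fun k : ℕ => (k : ℕ∞)) '' {k | ∃ U : Fin (k + 1) → Set X,
    (∀ j, IsOpen (U j)) ∧ (⋃ j, U j) = Set.univ ∧
    ∀ j i i', ((f i).restrict (U j)).Homotopic ((f i').restrict (U j))})

/-- The reduced Lusternik–Schnirelmann category of `X`: the least `k` such that
`X` admits an open cover of `k+1` open sets, each inclusion being null-homotopic. -/
noncomputable def lsCat (X : Type*) [TopologicalSpace X] : ℕ∞ :=
  sInf ((fun k : ℕ => (k : ℕ∞)) '' {k | ∃ U : Fin (k + 1) → Set X,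
    (∀ j, IsOpen (U j)) ∧ (⋃ j, U j) = Set.univ ∧
    ∀ j, ∃ y : X, ((ContinuousMap.id X).restrict (U j)).Homotopic
      (ContinuousMap.const _ y)})

/-- Two constant maps with path-joined values are homotopic. -/
lemma homotopic_const_of_path {Z Y : Type*} [TopologicalSpace Z] [TopologicalSpace Y]
    {a b : Y} (γ : Path a b) :
    (ContinuousMap.const Z a).Homotopic (ContinuousMap.const Z b) :=
  ⟨{ toFun := fun q => γ q.1
     continuous_toFun := γ.continuous.comp continuous_fst
     map_zero_left := fun _ => by simp
     map_one_left := fun _ => by simp }⟩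

/-- Set the first `t` coordinates to `x₀`. -/
def sMap {X : Type*} [TopologicalSpace X] (n : ℕ) (x₀ : X) (t : ℕ) :
    C((Fin n → X), (Fin n → X)) :=
  ⟨fun p m => if (m : ℕ) < t then x₀ else p m,
   continuous_pi fun m => by
     by_cases h : (m : ℕ) < t
     · simpa [h] using continuous_const
     · simpa [h] using continuous_apply m⟩

/-- For the `n` inclusions `jᵢ : X^{n-1} → X^n` inserting a fixed basepoint `x₀`
in the `i`-th coordinate, `D(j₁, …, jₙ) = cat(X^{n-1})`. -/
theorem homDist_insertNth_eq_lsCat {X : Type*} [TopologicalSpace X]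
    [PathConnectedSpace X] (n : ℕ) (x₀ : X) :
    homDist (fun i : Fin (n + 1) =>
      (⟨fun p : Fin n → X => i.insertNth x₀ p,
        continuous_const.finInsertNth i continuous_id⟩ :
          C((Fin n → X), (Fin (n + 1) → X)))) = lsCat (Fin n → X) := by
  set f : Fin (n + 1) → C((Fin n → X), (Fin (n + 1) → X)) := fun i =>
      (⟨fun p : Fin n → X => i.insertNth x₀ p,
        continuous_const.finInsertNth i continuous_id⟩ :
          C((Fin n → X), (Fin (n + 1) → X))) with hf
  have key : ∀ k : ℕ,
      (∃ U : Fin (k + 1) → Set (Fin n → X),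
        (∀ j, IsOpen (U j)) ∧ (⋃ j, U j) = Set.univ ∧
        ∀ j i i', ((f i).restrict (U j)).Homotopic ((f i').restrict (U j))) ↔
      (∃ U : Fin (k + 1) → Set (Fin n → X),
        (∀ j, IsOpen (U j)) ∧ (⋃ j, U j) = Set.univ ∧
        ∀ j, ∃ y : Fin n → X, ((ContinuousMap.id (Fin n → X)).restrict (U j)).Homotopic
          (ContinuousMap.const _ y)) := by
    intro k
    constructor
    · rintro ⟨U, hU, hcov, hpair⟩
      refine ⟨U, hU, hcov, fun j => ⟨fun _ => x₀, ?_⟩⟩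
      have main : ∀ t, t ≤ n →
          ((sMap n x₀ 0).restrict (U j)).Homotopic ((sMap n x₀ t).restrict (U j)) := by
        intro t
        induction t with
        | zero => exact fun _ => ContinuousMap.Homotopic.refl _
        | succ t ih =>
          intro hle
          have ht : t < n := hle
          set kk : Fin n := ⟨t, ht⟩ with hkk
          have H := hpair j (Fin.castSucc kk) (Fin.succ kk)
          set G : C((Fin (n + 1) → X), (Fin n → X)) :=
            (sMap n x₀ t).comp
              ⟨fun q m => q ((Fin.succ kk).succAbove m),
               continuous_pi fun m => continuous_apply _⟩ with hG
          have hcomp := ContinuousMap.Homotopic.comp (ContinuousMap.Homotopic.refl G) H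
          have eA : G.comp ((f (Fin.castSucc kk)).restrict (U j))
              = (sMap n x₀ (t + 1)).restrict (U j) := by
            refine ContinuousMap.ext fun p => funext fun m => ?_
            show (if (m : ℕ) < t then x₀ else
                ((Fin.castSucc kk).insertNth x₀ (p : Fin n → X) : Fin (n + 1) → X)
                  ((Fin.succ kk).succAbove m))
              = if (m : ℕ) < t + 1 then x₀ else (p : Fin n → X) m
            rcases lt_trichotomy (m : ℕ) t with hm | hm | hm
            · simp [hm, Nat.lt_succ_of_lt hm]
            · have hmk : m = kk := Fin.ext hm
              subst hmk
              rw [if_neg (lt_irrefl _), if_pos (Nat.lt_succ_self _)]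
              rw [Fin.succAbove_of_castSucc_lt _ _ Fin.castSucc_lt_succ,
                Fin.insertNth_apply_same]
            · have h1 : ¬ (m : ℕ) < t := by omega
              have h2 : ¬ (m : ℕ) < t + 1 := by omega
              rw [if_neg h1, if_neg h2]
              have hs : (Fin.succ kk).succAbove m = m.succ := by
                apply Fin.succAbove_of_le_castSucc
                simp [Fin.le_def, hkk]; omega
              have hs2 : (Fin.castSucc kk).succAbove m = m.succ := by
                apply Fin.succAbove_of_le_castSucc
                simp [Fin.le_def, hkk]; omega
              rw [hs, ← hs2, Fin.insertNth_apply_succAbove]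
          have eB : G.comp ((f (Fin.succ kk)).restrict (U j))
              = (sMap n x₀ t).restrict (U j) := by
            refine ContinuousMap.ext fun p => funext fun m => ?_
            show (if (m : ℕ) < t then x₀ else
                ((Fin.succ kk).insertNth x₀ (p : Fin n → X) : Fin (n + 1) → X)
                  ((Fin.succ kk).succAbove m))
              = if (m : ℕ) < t then x₀ else (p : Fin n → X) m
            rw [Fin.insertNth_apply_succAbove]
          rw [eA, eB] at hcomp
          exact (ih ht.le).trans hcomp.symm
      have h0 : sMap n x₀ 0 = ContinuousMap.id (Fin n → X) :=
        ContinuousMap.ext fun p => funext fun m => by simp [sMap]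
      have hn : sMap n x₀ n = ContinuousMap.const _ (fun _ => x₀) :=
        ContinuousMap.ext fun p => funext fun m => by simp [sMap, m.isLt]
      have := main n le_rfl
      rw [h0, hn] at this
      exact this
    · rintro ⟨U, hU, hcov, hnull⟩
      refine ⟨U, hU, hcov, fun j i i' => ?_⟩
      obtain ⟨y, hy⟩ := hnull j
      have hi : ∀ i : Fin (n + 1), ((f i).restrict (U j)).Homotopic
          (ContinuousMap.const _ ((f i) y)) := by
        intro i
        have h := ContinuousMap.Homotopic.comp (ContinuousMap.Homotopic.refl (f i)) hy
        have e1 : (f i).comp ((ContinuousMap.id (Fin n → X)).restrict (U j))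
            = (f i).restrict (U j) := ContinuousMap.ext fun _ => rfl
        have e2 : (f i).comp (ContinuousMap.const (U j) y)
            = ContinuousMap.const (U j) ((f i) y) := ContinuousMap.ext fun _ => rfl
        rwa [e1, e2] at h
      have γ : Path ((f i) y) ((f i') y) :=
        Path.pi fun m => PathConnectedSpace.somePath (((f i) y) m) (((f i') y) m)
      have hc : (ContinuousMap.const (U j) ((f i) y)).Homotopic
          (ContinuousMap.const (U j) ((f i') y)) := homotopic_const_of_path γ
      exact ((hi i).trans hc).trans (hi i').symm
  rw [homDist, lsCat]
  exact congrArg sInf (congrArg _ (Set.ext key))
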